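/- If φ is an orthonormal N-frame and η ∈ T_φ, then R := (φ+η)·(I_N + ⟦η,η⟧)^{-1/2} is again an orthonormal N-frame, i.e. ⟦R, R⟧ = I_N. -/

import Mathlib

open scoped RealInnerProductSpace
open Matrix

/-- The outer product `⟦v,w⟧ ∈ ℝ^{N×N}` of two tuples, with entries `⟨v i, w j⟩`. -/
noncomputable def outerProd {N : ℕ} {H₀ : Type*} [NormedAddCommGroup H₀]
    [InnerProductSpace ℝ H₀] (v w : Fin N → H₀) : Matrix (Fin N) (Fin N) ℝ :=
  Matrix.of fun i j => ⟪v i, w j⟫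

/-- Multiplication of a tuple by a matrix from the right: `(vS)_j = Σ_i S_{ij} v_i`. -/
def smulMat {N : ℕ} {H₀ : Type*} [AddCommGroup H₀] [Module ℝ H₀]
    (v : Fin N → H₀) (S : Matrix (Fin N) (Fin N) ℝ) : Fin N → H₀ :=
  fun j => ∑ i, S i j • v i

/-- The inner product `(v,w)_H = Σ_j ⟨v_j, w_j⟩ = tr⟦v,w⟧`. -/
noncomputable def innerH {N : ℕ} {H₀ : Type*} [NormedAddCommGroup H₀]
    [InnerProductSpace ℝ H₀] (v w : Fin N → H₀) : ℝ :=
  ∑ j, ⟪v j, w j⟫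

lemma outerProd_smulMat {N : ℕ} {H₀ : Type*} [NormedAddCommGroup H₀]
    [InnerProductSpace ℝ H₀] (v w : Fin N → H₀) (A B : Matrix (Fin N) (Fin N) ℝ) :
    outerProd (smulMat v A) (smulMat w B) = Aᵀ * outerProd v w * B := by
  ext j l
  simp only [outerProd, smulMat, Matrix.of_apply, Matrix.mul_apply, Matrix.transpose_apply]
  rw [sum_inner]
  simp_rw [inner_sum, real_inner_smul_left, real_inner_smul_right]
  rw [Finset.sum_comm]
  refine Finset.sum_congr rfl fun k _ => ?_
  rw [Finset.sum_mul]
  exact Finset.sum_congr rfl fun i _ => by ring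

lemma outerProd_add {N : ℕ} {H₀ : Type*} [NormedAddCommGroup H₀]
    [InnerProductSpace ℝ H₀] (u v w x : Fin N → H₀) :
    outerProd (u + v) (w + x)
      = outerProd u w + outerProd u x + outerProd v w + outerProd v x := by
  ext i j
  simp [outerProd, inner_add_add_self, inner_add_left, inner_add_right]
  ring

lemma outerProd_posSemidef {N : ℕ} {H₀ : Type*} [NormedAddCommGroup H₀]
    [InnerProductSpace ℝ H₀] (v : Fin N → H₀) : (outerProd v v).PosSemidef := by
  rw [Matrix.posSemidef_iff_dotProduct_mulVec]
  constructor
  · ext i j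
    simp [outerProd, Matrix.conjTranspose_apply, real_inner_comm]
  · intro x
    have : star x ⬝ᵥ (outerProd v v).mulVec x = ⟪∑ i, x i • v i, ∑ j, x j • v j⟫ := by
      rw [sum_inner]
      simp_rw [inner_sum, real_inner_smul_left, real_inner_smul_right]
      simp only [dotProduct, Matrix.mulVec, dotProduct, outerProd,
        Matrix.of_apply, star_trivial, Finset.mul_sum]
      congr 1; ext i; congr 1; ext j; ring
    rw [this]
    exact real_inner_self_nonneg

/-- the polar-decomposition-based retraction
`R = (φ+η)·(I + ⟦η,η⟧)^{-1/2}` is again an orthonormal frame. Here the square root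
`(I + ⟦η,η⟧)^{1/2}` is represented by any symmetric positive semidefinite matrix `S`
with `S * S = I + ⟦η,η⟧` (such an `S` is unique), and `(I + ⟦η,η⟧)^{-1/2} = S⁻¹`. -/
theorem polar_retraction_mem_stiefel {N : ℕ} (hN : 1 ≤ N) {H₀ : Type*}
    [NormedAddCommGroup H₀] [InnerProductSpace ℝ H₀]
    (φ η : Fin N → H₀) (hφ : outerProd φ φ = 1)
    (hη : outerProd η φ + outerProd φ η = 0)
    (S : Matrix (Fin N) (Fin N) ℝ) (hS : S.PosSemidef)
    (hSsq : S * S = 1 + outerProd η η) :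
    outerProd (smulMat (φ + η) S⁻¹) (smulMat (φ + η) S⁻¹) = 1 := by
  have hGram : outerProd (φ + η) (φ + η) = S * S := by
    rw [outerProd_add, hφ, hSsq]
    have : outerProd φ η + outerProd η φ = 0 := by
      rw [add_comm]; exact hη
    rw [show (1 : Matrix (Fin N) (Fin N) ℝ) + outerProd φ η + outerProd η φ + outerProd η η
        = 1 + (outerProd φ η + outerProd η φ) + outerProd η η by abel, this, add_zero]
  have hPD : (S * S).PosDef := by
    rw [hSsq]
    exact Matrix.PosDef.add_posSemidef Matrix.PosDef.one (outerProd_posSemidef η)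
  have hdet : IsUnit S.det := by
    rw [isUnit_iff_ne_zero]
    intro h
    have := hPD.det_pos
    rw [Matrix.det_mul, h, mul_zero] at this
    exact lt_irrefl 0 this
  have hsymm : Sᵀ = S := by
    have := hS.isHermitian
    rwa [Matrix.IsHermitian, Matrix.conjTranspose_eq_transpose_of_trivial] at this
  rw [outerProd_smulMat, hGram, Matrix.transpose_nonsing_inv, hsymm]
  rw [← mul_assoc, Matrix.nonsing_inv_mul _ hdet, one_mul, Matrix.mul_nonsing_inv _ hdet]
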